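/- Let H be a Hopf algebra over a field k and R a commutative k-algebra. A linear map σ : H ⊗ H → R is lazy, i.e. σ(x₁ ⊗ y₁) ⊗ x₂y₂ = σ(x₂ ⊗ y₂) ⊗ x₁y₁ in R ⊗ H for all x, y ∈ H, if and only if σ vanishes on the subspace I₂(H). -/

import Mathlib

open TensorProduct

/-- `I₂(H)`: the subspace of `H ⊗ H` spanned by the elements
`φ(x₂y₂)·(x₁ ⊗ y₁) − φ(x₁y₁)·(x₂ ⊗ y₂)` for `x, y ∈ H` and linear forms
`φ : H → k`, where `H ⊗ H` carries the tensor-product coalgebra structure. -/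
noncomputable def lazySubspace2 (k : Type*) [Field k] (H : Type*)
    [Ring H] [HopfAlgebra k H] : Submodule k (H ⊗[k] H) :=
  Submodule.span k {z : H ⊗[k] H | ∃ (x y : H) (φ : H →ₗ[k] k),
    z = (TensorProduct.rid k (H ⊗[k] H))
          (TensorProduct.map
            (LinearMap.id : H ⊗[k] H →ₗ[k] H ⊗[k] H)
            (φ ∘ₗ LinearMap.mul' k H)
            (Coalgebra.comul (R := k) (x ⊗ₜ[k] y)))
      - (TensorProduct.lid k (H ⊗[k] H))
          (TensorProduct.map
            (φ ∘ₗ LinearMap.mul' k H)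
            (LinearMap.id : H ⊗[k] H →ₗ[k] H ⊗[k] H)
            (Coalgebra.comul (R := k) (x ⊗ₜ[k] y)))}

/-- Linear forms separate points of `R ⊗[k] H` when `k` is a field. -/
lemma aux_separating (k : Type*) [Field k] (H : Type*) [AddCommGroup H] [Module k H]
    (R : Type*) [CommRing R] [Algebra k R] (t : R ⊗[k] H)
    (h : ∀ φ : H →ₗ[k] k, (TensorProduct.rid k R) ((LinearMap.lTensor R φ) t) = 0) :
    t = 0 := by
  classical
  let b := Module.Basis.ofVectorSpace k H
  let e : R ⊗[k] H ≃ₗ[k] (Module.Basis.ofVectorSpaceIndex k H →₀ R) :=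
    (TensorProduct.congr (LinearEquiv.refl k R) b.repr).trans
      (finsuppScalarRight k k R _)
  apply e.injective
  rw [map_zero]
  ext j
  have comp : (LinearMap.lTensor R (Finsupp.lapply j :
        (Module.Basis.ofVectorSpaceIndex k H →₀ k) →ₗ[k] k)) ∘ₗ
        (TensorProduct.congr (LinearEquiv.refl k R) b.repr).toLinearMap
      = LinearMap.lTensor R (b.coord j) := by
    ext r x
    simp [b, Module.Basis.coord]
  have : e t j = (TensorProduct.rid k R) ((LinearMap.lTensor R (b.coord j)) t) := by
    rw [show e t = (finsuppScalarRight k k R _)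
        ((TensorProduct.congr (LinearEquiv.refl k R) b.repr) t) from rfl,
      finsuppScalarRight_apply, ← LinearMap.congr_fun comp t]
    rfl
  rw [this]
  simp [h (b.coord j)]

section Aux
variable (k : Type*) [Field k] (H : Type*) [Ring H] [HopfAlgebra k H]
  (R : Type*) [CommRing R] [Algebra k R]
  (σ : H ⊗[k] H →ₗ[k] R) (φ : H →ₗ[k] k)

/-- `r ⊗ h ↦ φ(h) • r`. -/
noncomputable def auxPsi : R ⊗[k] H →ₗ[k] R :=
  (TensorProduct.rid k R).toLinearMap ∘ₗ LinearMap.lTensor R φ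

lemma aux_key1 (t : (H ⊗[k] H) ⊗[k] (H ⊗[k] H)) :
    σ ((TensorProduct.rid k (H ⊗[k] H))
        (TensorProduct.map (LinearMap.id : H ⊗[k] H →ₗ[k] H ⊗[k] H)
          (φ ∘ₗ LinearMap.mul' k H) t))
      = auxPsi k H R φ (TensorProduct.map σ (LinearMap.mul' k H) t) := by
  have : σ ∘ₗ (TensorProduct.rid k (H ⊗[k] H)).toLinearMap ∘ₗ
        TensorProduct.map LinearMap.id (φ ∘ₗ LinearMap.mul' k H)
      = auxPsi k H R φ ∘ₗ TensorProduct.map σ (LinearMap.mul' k H) := by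
    apply TensorProduct.ext'
    intro a b
    simp [auxPsi]
  exact LinearMap.congr_fun this t

lemma aux_key2 (t : (H ⊗[k] H) ⊗[k] (H ⊗[k] H)) :
    σ ((TensorProduct.lid k (H ⊗[k] H))
        (TensorProduct.map (φ ∘ₗ LinearMap.mul' k H)
          (LinearMap.id : H ⊗[k] H →ₗ[k] H ⊗[k] H) t))
      = auxPsi k H R φ (TensorProduct.map σ (LinearMap.mul' k H)
          ((TensorProduct.comm k (H ⊗[k] H) (H ⊗[k] H)) t)) := by
  have : σ ∘ₗ (TensorProduct.lid k (H ⊗[k] H)).toLinearMap ∘ₗ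
        TensorProduct.map (φ ∘ₗ LinearMap.mul' k H) LinearMap.id
      = (auxPsi k H R φ ∘ₗ TensorProduct.map σ (LinearMap.mul' k H)) ∘ₗ
        (TensorProduct.comm k (H ⊗[k] H) (H ⊗[k] H)).toLinearMap := by
    apply TensorProduct.ext'
    intro a b
    simp [auxPsi]
  exact LinearMap.congr_fun this t

end Aux

/-- a linear map `σ : H ⊗ H → R` is lazy, i.e.
`σ(x₁ ⊗ y₁) ⊗ x₂y₂ = σ(x₂ ⊗ y₂) ⊗ x₁y₁` in `R ⊗ H` for all `x, y ∈ H`,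
if and only if `σ` vanishes on `I₂(H)`. -/
theorem lazy2_iff_vanishes_on_lazySubspace2 (k : Type*) [Field k] (H : Type*)
    [Ring H] [HopfAlgebra k H] (R : Type*) [CommRing R] [Algebra k R]
    (σ : H ⊗[k] H →ₗ[k] R) :
    (∀ x y : H,
      TensorProduct.map σ (LinearMap.mul' k H)
          (Coalgebra.comul (R := k) (x ⊗ₜ[k] y))
        = TensorProduct.map σ (LinearMap.mul' k H)
            ((TensorProduct.comm k (H ⊗[k] H) (H ⊗[k] H))
              (Coalgebra.comul (R := k) (x ⊗ₜ[k] y))))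
    ↔ ∀ z ∈ lazySubspace2 k H, σ z = 0 := by
  constructor
  · intro hlazy z hz
    refine Submodule.span_induction ?_ ?_ ?_ ?_ hz
    · rintro w ⟨x, y, φ, rfl⟩
      rw [map_sub, aux_key1 k H R σ φ, aux_key2 k H R σ φ, hlazy x y, sub_self]
    · exact map_zero σ
    · intro u v _ _ hu hv
      rw [map_add, hu, hv, add_zero]
    · intro c u _ hu
      rw [map_smul, hu, smul_zero]
  · intro hvan x y
    rw [← sub_eq_zero]
    apply aux_separating k H R
    intro φ
    have hmem : ((TensorProduct.rid k (H ⊗[k] H))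
          (TensorProduct.map (LinearMap.id : H ⊗[k] H →ₗ[k] H ⊗[k] H)
            (φ ∘ₗ LinearMap.mul' k H) (Coalgebra.comul (R := k) (x ⊗ₜ[k] y)))
        - (TensorProduct.lid k (H ⊗[k] H))
          (TensorProduct.map (φ ∘ₗ LinearMap.mul' k H)
            (LinearMap.id : H ⊗[k] H →ₗ[k] H ⊗[k] H)
            (Coalgebra.comul (R := k) (x ⊗ₜ[k] y)))) ∈ lazySubspace2 k H :=
      Submodule.subset_span ⟨x, y, φ, rfl⟩
    have h0 := hvan _ hmem
    rw [map_sub, aux_key1 k H R σ φ, aux_key2 k H R σ φ] at h0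
    have : auxPsi k H R φ
        (TensorProduct.map σ (LinearMap.mul' k H)
            (Coalgebra.comul (R := k) (x ⊗ₜ[k] y))
          - TensorProduct.map σ (LinearMap.mul' k H)
            ((TensorProduct.comm k (H ⊗[k] H) (H ⊗[k] H))
              (Coalgebra.comul (R := k) (x ⊗ₜ[k] y)))) = 0 := by
      rw [map_sub, h0]
    simpa [auxPsi, map_sub] using this
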